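/- Let g be a positive integer, h > 0, and d ≥ 1 an integer, and let D be the discrete derivative operator of order 2d with periodic boundary conditions on ℂ^{ℤ/gℤ} with grid spacing h. Then the spectral norm of D satisfies ‖D‖ ≤ (Σ_{k=−d}^{d} |c_{d,k}|)/h ≤ 2·(ln d + 1)/h. -/

import Mathlib

open scoped Matrix.Norms.L2Operator
open Matrix

/-- The central finite-difference coefficients `c_{d,k}` of order `2d`:
`c_{d,k} = (-1)^(k+1) · (d!)² / (k·(d-k)!·(d+k)!)` for `k ≠ 0`, and `c_{d,0} = 0`. -/
noncomputable def centralFDCoeff (d : ℕ) (k : ℤ) : ℝ :=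
  if k = 0 then 0
  else (-1 : ℝ) ^ (k + 1) * ((d.factorial : ℝ)) ^ 2 /
    ((k : ℝ) * (((d : ℤ) - k).toNat.factorial : ℝ) * (((d : ℤ) + k).toNat.factorial : ℝ))

/-- The discrete derivative operator of order `2d` with periodic boundary conditions on
`ℂ^{ℤ/gℤ}` with grid spacing `h`:  `D = (1/h)·Σ_x Σ_{k=-d}^{d} c_{d,k}·E_{x-k,x}`. -/
noncomputable def discreteDeriv (g : ℕ) [NeZero g] (h : ℝ) (d : ℕ) :
    Matrix (ZMod g) (ZMod g) ℂ :=
  ((1 / h : ℝ) : ℂ) •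
    ∑ x : ZMod g, ∑ k ∈ Finset.Icc (-(d : ℤ)) (d : ℤ),
      ((centralFDCoeff d k : ℝ) : ℂ) • Matrix.single (x - (k : ZMod g)) x (1 : ℂ)

private lemma shiftMat_eq (g : ℕ) [NeZero g] (c : ZMod g) :
    (∑ x : ZMod g, Matrix.single (x - c) x (1:ℂ)) =
      Matrix.of fun i j => if i = j - c then 1 else 0 := by
  ext i j
  simp only [Matrix.sum_apply, Matrix.single, Matrix.of_apply]
  rw [Finset.sum_eq_single j]
  · simp [eq_comm]
  · intro b _ hb; simp [hb]
  · simp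


private lemma shiftMat_norm (g : ℕ) [NeZero g] (c : ZMod g) :
    ‖∑ x : ZMod g, Matrix.single (x - c) x (1:ℂ)‖ = 1 := by
  rw [shiftMat_eq]
  set P : Matrix (ZMod g) (ZMod g) ℂ := Matrix.of fun i j => if i = j - c then 1 else 0 with hP
  have hu : Pᴴ * P = 1 := by
    ext i j
    simp only [Matrix.mul_apply, Matrix.conjTranspose_apply, hP, Matrix.of_apply,
      Matrix.one_apply]
    rw [Finset.sum_eq_single (i - c)]
    · by_cases hij : i = j <;> simp [hij, sub_left_inj, eq_comm, apply_ite (starRingEnd ℂ)]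
    · intro b _ hb
      simp [hb, apply_ite (starRingEnd ℂ)]
    · simp
  have h2 : ‖P‖ * ‖P‖ = 1 := by
    rw [← Matrix.l2_opNorm_conjTranspose_mul_self, hu]
    haveI : Nonempty (ZMod g) := ⟨0⟩
    exact norm_one
  nlinarith [norm_nonneg P]


private lemma fact_sq_le (d k : ℕ) (hk : k ≤ d) :
    d.factorial * d.factorial ≤ (d - k).factorial * (d + k).factorial := by
  have h1 := Nat.choose_mul_factorial_mul_factorial (show d ≤ d + d by omega)
  have h2 := Nat.choose_mul_factorial_mul_factorial (show d + k ≤ d + d by omega)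
  rw [show d + d - d = d by omega] at h1
  rw [show d + d - (d + k) = d - k by omega] at h2
  have h3 : (d + d).choose (d + k) ≤ (d + d).choose d := by
    have := Nat.choose_le_middle (d + k) (d + d)
    rwa [show (d + d) / 2 = d by omega] at this
  have h4 : 0 < (d + d).choose d := Nat.choose_pos (by omega)
  have key : (d + d).choose d * (d.factorial * d.factorial) ≤
      (d + d).choose d * ((d - k).factorial * (d + k).factorial) := by
    calc (d + d).choose d * (d.factorial * d.factorial)
        = (d + d).factorial := by rw [← h1]; ring
      _ = (d + d).choose (d + k) * ((d + k).factorial * (d - k).factorial) := by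
          rw [← h2]; ring
      _ ≤ (d + d).choose d * ((d - k).factorial * (d + k).factorial) := by
          rw [mul_comm ((d+k).factorial)]; exact Nat.mul_le_mul_right _ h3
  exact Nat.le_of_mul_le_mul_left key h4


private lemma abs_coeff_le (d : ℕ) (k : ℤ) (hk : k.natAbs ≤ d) :
    |centralFDCoeff d k| ≤ if k = 0 then 0 else (|(k:ℝ)|)⁻¹ := by
  by_cases h0 : k = 0
  · simp [centralFDCoeff, h0]
  · rw [centralFDCoeff, if_neg h0, if_neg h0]
    have hone : |(-1:ℝ) ^ (k+1)| = 1 := by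
      rcases Int.even_or_odd (k+1) with he | ho
      · rw [he.neg_one_zpow, abs_one]
      · rw [ho.neg_one_zpow, abs_neg, abs_one]
    rw [abs_div, abs_mul, hone, one_mul]
    rw [abs_mul, abs_mul]
    set a := ((d : ℤ) - k).toNat
    set b := ((d : ℤ) + k).toNat
    have hab : Nat.factorial d * Nat.factorial d ≤ a.factorial * b.factorial := by
      rcases le_or_gt 0 k with hpos | hneg
      · have : a = d - k.natAbs ∧ b = d + k.natAbs := by
          constructor <;> [skip; skip] <;> omega
        rw [this.1, this.2]; exact fact_sq_le d k.natAbs hk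
      · have : a = d + k.natAbs ∧ b = d - k.natAbs := by
          constructor <;> omega
        rw [this.1, this.2]
        simpa [mul_comm] using fact_sq_le d k.natAbs hk
    have hfp : (0:ℝ) < (a.factorial : ℝ) * (b.factorial : ℝ) := by positivity
    have hkpos : (0:ℝ) < |(k:ℝ)| := by
      simpa using abs_pos.mpr (show (k:ℝ) ≠ 0 by exact_mod_cast h0)
    rw [div_le_iff₀ (by positivity)]
    have habs : |((d.factorial : ℝ))^2| = (d.factorial:ℝ)^2 := abs_of_nonneg (by positivity)
    rw [habs]
    have h1 : (d.factorial:ℝ)^2 ≤ (a.factorial : ℝ) * (b.factorial : ℝ) := by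
      rw [sq]; exact_mod_cast hab
    calc (d.factorial:ℝ)^2 ≤ (a.factorial : ℝ) * (b.factorial : ℝ) := h1
      _ = |(k:ℝ)|⁻¹ * (|(k:ℝ)| * ((a.factorial : ℝ) * (b.factorial : ℝ))) := by
          field_simp
      _ = |(k:ℝ)|⁻¹ * (|(k:ℝ)| * |(a.factorial : ℝ)| * |(b.factorial : ℝ)|) := by
          rw [abs_of_nonneg (by positivity : (0:ℝ) ≤ (a.factorial:ℝ)),
            abs_of_nonneg (by positivity : (0:ℝ) ≤ (b.factorial:ℝ))]; ring


private lemma sum_inv_eq (d : ℕ) :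
    (∑ k ∈ Finset.Icc (-(d:ℤ)) (d:ℤ), (if k = 0 then 0 else (|(k:ℝ)|)⁻¹)) =
      2 * ∑ i ∈ Finset.range d, ((i:ℝ) + 1)⁻¹ := by
  have hsplit : Finset.Icc (-(d:ℤ)) (d:ℤ) =
      (Finset.Icc (-(d:ℤ)) (-1)) ∪ ({0} : Finset ℤ) ∪ Finset.Icc 1 (d:ℤ) := by
    ext k; simp [Finset.mem_Icc, Finset.mem_union]; omega
  rw [hsplit]
  rw [Finset.sum_union (by simp [Finset.disjoint_left, Finset.mem_Icc]; omega),
    Finset.sum_union (by simp [Finset.disjoint_left, Finset.mem_Icc]; omega)]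
  have h0 : (∑ k ∈ ({0} : Finset ℤ), (if k = 0 then 0 else (|(k:ℝ)|)⁻¹)) = 0 := by simp
  have hpos : (∑ k ∈ Finset.Icc (1:ℤ) (d:ℤ), (if k = 0 then 0 else (|(k:ℝ)|)⁻¹)) =
      ∑ i ∈ Finset.range d, ((i:ℝ) + 1)⁻¹ := by
    refine Finset.sum_nbij' (fun k => (k - 1).toNat) (fun i => (i : ℤ) + 1) ?_ ?_ ?_ ?_ ?_
    · intro k hk; simp only [Finset.mem_Icc] at hk; simp only [Finset.mem_range]; omega
    · intro i hi; simp only [Finset.mem_range] at hi; simp only [Finset.mem_Icc]; omega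
    · intro k hk; simp only [Finset.mem_Icc] at hk
      show (((k - 1).toNat : ℤ) + 1) = k; omega
    · intro i hi; show ((i : ℤ) + 1 - 1).toNat = i; omega
    · intro k hk
      simp only [Finset.mem_Icc] at hk
      rw [if_neg (by omega)]
      have h1 : ((k - 1).toNat : ℤ) = k - 1 := by omega
      have h2 : ((k - 1).toNat : ℝ) = (k:ℝ) - 1 := by exact_mod_cast congrArg (fun x : ℤ => (x : ℝ)) h1
      have h3 : ((k - 1).toNat : ℝ) + 1 = (k : ℝ) := by rw [h2]; ring
      have hk0 : (0:ℝ) < (k:ℝ) := by exact_mod_cast (by omega : (0:ℤ) < k)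
      rw [show (((k - 1).toNat : ℕ) : ℝ) + 1 = (k : ℝ) from h3, abs_of_pos hk0]
  have hneg : (∑ k ∈ Finset.Icc (-(d:ℤ)) (-1:ℤ), (if k = 0 then 0 else (|(k:ℝ)|)⁻¹)) =
      ∑ k ∈ Finset.Icc (1:ℤ) (d:ℤ), (if k = 0 then 0 else (|(k:ℝ)|)⁻¹) := by
    refine Finset.sum_nbij' (fun k => -k) (fun k => -k) ?_ ?_ ?_ ?_ ?_
    · intro k hk; simp only [Finset.mem_Icc] at hk; beta_reduce
      refine Finset.mem_Icc.mpr ⟨by omega, by omega⟩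
    · intro k hk; simp only [Finset.mem_Icc] at hk; beta_reduce
      refine Finset.mem_Icc.mpr ⟨by omega, by omega⟩
    · intro k _; show -(-k) = k; ring
    · intro k _; show -(-k) = k; ring
    · intro k hk
      simp only [Finset.mem_Icc] at hk; beta_reduce
      rw [if_neg (by omega), if_neg (by omega)]
      push_cast
      rw [abs_neg]
  rw [h0, hneg, hpos]
  ring


private lemma sum_harmonic_le (d : ℕ) :
    (∑ i ∈ Finset.range d, ((i:ℝ) + 1)⁻¹) ≤ Real.log d + 1 := by
  have h : (harmonic d : ℝ) ≤ 1 + Real.log d := harmonic_le_one_add_log d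
  have he : (harmonic d : ℝ) = ∑ i ∈ Finset.range d, ((i:ℝ) + 1)⁻¹ := by
    rw [harmonic]
    push_cast
    rfl
  linarith [he ▸ h]


private lemma discreteDeriv_norm_le_aux (g : ℕ) [NeZero g] (h : ℝ) (hh : 0 < h) (d : ℕ) :
    ‖discreteDeriv g h d‖ ≤ (∑ k ∈ Finset.Icc (-(d : ℤ)) (d : ℤ), |centralFDCoeff d k|) / h := by
  have hD : discreteDeriv g h d = ((1 / h : ℝ) : ℂ) •
      ∑ k ∈ Finset.Icc (-(d : ℤ)) (d : ℤ), ((centralFDCoeff d k : ℝ) : ℂ) •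
        ∑ x : ZMod g, Matrix.single (x - (k : ZMod g)) x (1 : ℂ) := by
    rw [discreteDeriv, Finset.sum_comm]
    simp_rw [Finset.smul_sum]
  rw [hD, norm_smul]
  have h1 : ‖((1 / h : ℝ) : ℂ)‖ = 1 / h := by
    rw [Complex.norm_real, Real.norm_eq_abs, abs_of_pos (by positivity)]
  rw [h1]
  have h2 : ‖∑ k ∈ Finset.Icc (-(d : ℤ)) (d : ℤ), ((centralFDCoeff d k : ℝ) : ℂ) •
      ∑ x : ZMod g, Matrix.single (x - (k : ZMod g)) x (1 : ℂ)‖ ≤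
      ∑ k ∈ Finset.Icc (-(d : ℤ)) (d : ℤ), |centralFDCoeff d k| := by
    refine (norm_sum_le _ _).trans (Finset.sum_le_sum fun k _ => ?_)
    rw [norm_smul, shiftMat_norm, mul_one, Complex.norm_real, Real.norm_eq_abs]
  calc 1 / h * ‖_‖ ≤ 1 / h * ∑ k ∈ Finset.Icc (-(d : ℤ)) (d : ℤ), |centralFDCoeff d k| := by
        exact mul_le_mul_of_nonneg_left h2 (by positivity)
    _ = _ := by rw [one_div, inv_mul_eq_div]

/-- **Spectral norm bound on the discrete derivative operator**:
`‖D‖ ≤ (Σ_k |c_{d,k}|)/h ≤ 2·(ln d + 1)/h`. -/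
theorem discreteDeriv_norm_le (g : ℕ) [NeZero g] (h : ℝ) (hh : 0 < h) (d : ℕ) (hd : 1 ≤ d) :
    ‖discreteDeriv g h d‖ ≤ (∑ k ∈ Finset.Icc (-(d : ℤ)) (d : ℤ), |centralFDCoeff d k|) / h ∧
      (∑ k ∈ Finset.Icc (-(d : ℤ)) (d : ℤ), |centralFDCoeff d k|) / h ≤
        2 * (Real.log d + 1) / h := by
  constructor
  · exact discreteDeriv_norm_le_aux g h hh d
  · have hS : (∑ k ∈ Finset.Icc (-(d : ℤ)) (d : ℤ), |centralFDCoeff d k|) ≤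
        2 * (Real.log d + 1) := by
      calc (∑ k ∈ Finset.Icc (-(d : ℤ)) (d : ℤ), |centralFDCoeff d k|)
          ≤ ∑ k ∈ Finset.Icc (-(d : ℤ)) (d : ℤ), (if k = 0 then 0 else (|(k:ℝ)|)⁻¹) := by
            refine Finset.sum_le_sum fun k hk => ?_
            simp only [Finset.mem_Icc] at hk
            exact abs_coeff_le d k (by omega)
        _ = 2 * ∑ i ∈ Finset.range d, ((i:ℝ) + 1)⁻¹ := sum_inv_eq d
        _ ≤ 2 * (Real.log d + 1) := by linarith [sum_harmonic_le d]
    gcongr
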